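/- Weak well-linked decomposition termination bound: in a process that maintains a partition W of a vertex set S (with |out(S)| = z), and in each step replaces some R ∈ W by (A,B) with |E(A,B)| < min{|T_A|,|T_B|}/(2^7 log z) (where T_A = out(R)∩out(A), T_B = out(R)∩out(B), and w.l.o.g. |T_A| ≤ |T_B|), the final partition satisfies Σ_{R ∈ W} |out(R)| ≤ 1.2·|out(S)|. -/

import Mathlib

open scoped Classical

namespace VS

/-- A walk in a multigraph whose edges `E` have endpoints given by `ends`. -/
structure Walk (V : Type*) (E : Type*) (ends : E → Sym2 V) where
  n : ℕ
  vert : Fin (n + 1) → V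
  edge : Fin n → E
  coh : ∀ i : Fin n, ends (edge i) = s(vert i.castSucc, vert i.succ)

namespace Walk

variable {V E : Type*} {ends : E → Sym2 V}

def start (w : Walk V E ends) : V := w.vert 0

def finish (w : Walk V E ends) : V := w.vert (Fin.last w.n)

def uses (w : Walk V E ends) (f : E) : Prop := ∃ i, w.edge i = f

/-- Number of occurrences of the edge `f` on the walk. -/
noncomputable def mult (w : Walk V E ends) (f : E) : ℕ :=
  Nat.card {i : Fin w.n // w.edge i = f}

/-- The first edge of the walk, if any. -/
noncomputable def fe (w : Walk V E ends) : Option E :=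
  if h : 0 < w.n then some (w.edge ⟨0, h⟩) else none

/-- The last edge of the walk, if any. -/
noncomputable def le (w : Walk V E ends) : Option E :=
  if h : 0 < w.n then some (w.edge ⟨w.n - 1, by omega⟩) else none

/-- All edges of the walk other than the first and the last one have both
endpoints in `S` (i.e. the walk is contained in `S`). -/
def InternalIn (w : Walk V E ends) (S : Set V) : Prop :=
  ∀ i : Fin w.n, (i : ℕ) ≠ 0 → (i : ℕ) + 1 ≠ w.n → ∀ x ∈ ends (w.edge i), x ∈ S

end Walk

variable {V V' E : Type*}

/-- `e` has exactly one endpoint in `S`, i.e. `e ∈ out(S)`. -/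
def Out (ends : E → Sym2 V) (S : Set V) (e : E) : Prop :=
  ∃ u v, ends e = s(u, v) ∧ u ∈ S ∧ v ∉ S

/-- `e` has one endpoint in `A` and the other one in `B`. -/
def Crosses (ends : E → Sym2 V) (A B : Set V) (e : E) : Prop :=
  ∃ u v, ends e = s(u, v) ∧ u ∈ A ∧ v ∈ B

noncomputable def outCard (ends : E → Sym2 V) (S : Set V) : ℕ :=
  Nat.card {e : E // Out ends S e}

noncomputable def crossCard (ends : E → Sym2 V) (A B : Set V) : ℕ :=
  Nat.card {e : E // Crosses ends A B e}

/-- Value of the minimum edge cut separating `TA` from `TB` (unit capacities). -/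
noncomputable def minCut (ends : E → Sym2 V) (TA TB : Set V) : ℕ :=
  sInf { n : ℕ | ∃ A : Set V, TA ⊆ A ∧ Disjoint A TB ∧ n = outCard ends A }

/-- `R` is `α`-well-linked: for every partition `(A, B)` of `R`,
`|E(A,B)| ≥ α · min (|out R ∩ out A|) (|out R ∩ out B|)`. -/
def WellLinked (ends : E → Sym2 V) (α : ℝ) (R : Set V) : Prop :=
  ∀ A B : Set V, A ∪ B = R → Disjoint A B →
    α * min (Nat.card {e : E // Out ends R e ∧ Out ends A e} : ℝ)
        (Nat.card {e : E // Out ends R e ∧ Out ends B e}) ≤ crossCard ends A B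

/-- `R` is `α`-well-linked for the edge set `E' ⊆ out(R)`. -/
def WellLinkedFor (ends : E → Sym2 V) (α : ℝ) (R : Set V) (E' : Set E) : Prop :=
  ∀ A B : Set V, A ∪ B = R → Disjoint A B →
    α * min (Nat.card {e : E // e ∈ E' ∧ Out ends A e} : ℝ)
        (Nat.card {e : E // e ∈ E' ∧ Out ends B e}) ≤ crossCard ends A B

/-- `φ : V → V'` is the quotient map contracting exactly the clusters of `𝒞`. -/
def IsContraction (φ : V → V') (𝒞 : Set (Set V)) : Prop :=
  (∀ S ∈ 𝒞, ∀ u ∈ S, ∀ v ∈ S, φ u = φ v) ∧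
  (∀ u v : V, φ u = φ v → u = v ∨ ∃ S ∈ 𝒞, u ∈ S ∧ v ∈ S)

/-- Amount of flow that the path-flow `F` routes between the vertices `x` and `y`. -/
noncomputable def routed {ends : E → Sym2 V} (F : List (Walk V E ends × ℝ)) (x y : V) : ℝ :=
  (F.map (fun p => if s(p.1.start, p.1.finish) = s(x, y) then p.2 else 0)).sum

/-- Amount of flow that the path-flow `F` routes between the edges `e` and `e'`. -/
noncomputable def routedE {ends : E → Sym2 V} (F : List (Walk V E ends × ℝ)) (e e' : E) : ℝ :=
  (F.map (fun p =>
    if (p.1.fe = some e ∧ p.1.le = some e') ∨ (p.1.fe = some e' ∧ p.1.le = some e)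
    then p.2 else 0)).sum

/-- Total flow of the path-flow `F` through the edge `f` (congestion at `f`,
for unit capacities). -/
noncomputable def congAt {ends : E → Sym2 V} (F : List (Walk V E ends × ℝ)) (f : E) : ℝ :=
  (F.map (fun p => p.2 * (p.1.mult f : ℝ))).sum

/-- All weights of the path-flow are nonnegative. -/
def NonnegWt {ends : E → Sym2 V} (F : List (Walk V E ends × ℝ)) : Prop := ∀ p ∈ F, 0 ≤ p.2

/-- Reachability inside the vertex set `S`. -/
def reachIn {V E : Type*} (ends : E → Sym2 V) (S : Set V) : V → V → Prop :=
  Relation.ReflTransGen (fun a b => a ∈ S ∧ b ∈ S ∧ ∃ e, ends e = s(a, b))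

/-- One step of the weak well-linked decomposition: some set `R` of the current
partition is replaced by a partition `(A, B)` of sparsity less than `1/(2^7 log z)`. -/
def WeakStep {V E : Type*} [Fintype E] [DecidableEq V] (ends : E → Sym2 V) (z : ℕ)
    (W W' : Finset (Finset V)) : Prop :=
  ∃ R ∈ W, ∃ A B : Finset V, A.Nonempty ∧ B.Nonempty ∧ Disjoint A B ∧ A ∪ B = R ∧
    (crossCard ends ↑A ↑B : ℝ) * (2 ^ 7 * Real.logb 2 z) <
      min (Nat.card {e : E // Out ends ↑R e ∧ Out ends ↑A e} : ℝ)
          (Nat.card {e : E // Out ends ↑R e ∧ Out ends ↑B e}) ∧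
    W' = insert A (insert B (W.erase R))


section Proof

variable {V E : Type*} [Fintype V] [Fintype E] [DecidableEq V] (ends : E → Sym2 V)

/-- The set of edges leaving `X`, as a finset. -/
noncomputable def oF (X : Set V) : Finset E := Finset.univ.filter (Out ends X)

lemma mem_oF {X : Set V} {e : E} : e ∈ oF ends X ↔ Out ends X e := by simp [oF]

lemma outCard_eq_oF (X : Set V) : outCard ends X = (oF ends X).card := by
  rw [outCard, Nat.card_eq_fintype_card, Fintype.card_subtype, oF]

noncomputable def cF (A B : Set V) : Finset E := Finset.univ.filter (Crosses ends A B)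

lemma mem_cF {A B : Set V} {e : E} : e ∈ cF ends A B ↔ Crosses ends A B e := by simp [cF]

lemma cF_card (A B : Set V) : crossCard ends A B = (cF ends A B).card := by
  rw [crossCard, Nat.card_eq_fintype_card, Fintype.card_subtype, cF]

noncomputable def tF (R X : Set V) : Finset E :=
  Finset.univ.filter (fun e => Out ends R e ∧ Out ends X e)

lemma mem_tF {R X : Set V} {e : E} :
    e ∈ tF ends R X ↔ Out ends R e ∧ Out ends X e := by simp [tF]

lemma tF_card (R X : Set V) :
    Nat.card {e : E // Out ends R e ∧ Out ends X e} = (tF ends R X).card := by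
  rw [Nat.card_eq_fintype_card, Fintype.card_subtype, tF]

section Split
variable {A B R : Finset V} (hd : Disjoint A B) (hu : A ∪ B = R)

include hd hu in
lemma out_cases {e : E} (hR : Out ends ↑R e) :
    (Out ends ↑A e ∧ ¬ Out ends ↑B e) ∨ (Out ends ↑B e ∧ ¬ Out ends ↑A e) := by
  obtain ⟨u, v, huv, huR, hvR⟩ := hR
  simp only [Finset.mem_coe] at huR hvR
  have hvA : v ∉ A := fun h => hvR (hu ▸ Finset.mem_union_left _ h)
  have hvB : v ∉ B := fun h => hvR (hu ▸ Finset.mem_union_right _ h)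
  have huAB : u ∈ A ∪ B := hu ▸ huR
  rcases Finset.mem_union.1 huAB with hA | hB
  · left
    refine ⟨⟨u, v, huv, by simpa using hA, by simpa using hvA⟩, ?_⟩
    rintro ⟨u', v', huv', hub, hvb⟩
    rw [huv] at huv'
    rcases Sym2.eq_iff.1 huv' with ⟨h1, h2⟩ | ⟨h1, h2⟩
    · exact Finset.disjoint_left.1 hd hA (by simpa [h1] using hub)
    · exact hvB (by simpa [← h2] using hub)
  · right
    refine ⟨⟨u, v, huv, by simpa using hB, by simpa using hvB⟩, ?_⟩
    rintro ⟨u', v', huv', hua, hva⟩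
    rw [huv] at huv'
    rcases Sym2.eq_iff.1 huv' with ⟨h1, h2⟩ | ⟨h1, h2⟩
    · exact Finset.disjoint_left.1 hd (by simpa [h1] using hua) hB
    · exact hvA (by simpa [← h2] using hua)

include hd hu in
lemma tF_split :
    (tF ends ↑R ↑A).card + (tF ends ↑R ↑B).card = (oF ends ↑R).card := by
  have hdisj : Disjoint (tF ends ↑R ↑A) (tF ends ↑R ↑B) := by
    rw [Finset.disjoint_left]
    rintro e he1 he2
    rw [mem_tF] at he1 he2
    rcases out_cases ends hd hu he1.1 with ⟨-, h⟩ | ⟨-, h⟩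
    · exact h he2.2
    · exact h he1.2
  have hun : tF ends ↑R ↑A ∪ tF ends ↑R ↑B = oF ends ↑R := by
    ext e
    simp only [Finset.mem_union, mem_tF, mem_oF]
    constructor
    · rintro (⟨h, -⟩ | ⟨h, -⟩) <;> exact h
    · intro h
      rcases out_cases ends hd hu h with ⟨h', -⟩ | ⟨h', -⟩
      · exact Or.inl ⟨h, h'⟩
      · exact Or.inr ⟨h, h'⟩
  rw [← hun, Finset.card_union_of_disjoint hdisj]

include hd hu in
lemma oF_le_tF_add_cF :
    (oF ends ↑A).card ≤ (tF ends ↑R ↑A).card + (cF ends ↑A ↑B).card := by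
  have hsub : oF ends ↑A ⊆ tF ends (↑R : Set V) ↑A ∪ cF ends ↑A ↑B := by
    intro e he
    rw [mem_oF] at he
    obtain ⟨u, v, huv, huA, hvA⟩ := he
    simp only [Finset.mem_coe] at huA hvA
    rw [Finset.mem_union, mem_tF, mem_cF]
    by_cases hvR : v ∈ R
    · right
      have hvB : v ∈ B := by
        rcases Finset.mem_union.1 (hu ▸ hvR) with h | h
        · exact absurd h hvA
        · exact h
      exact ⟨u, v, huv, by simpa using huA, by simpa using hvB⟩
    · left
      refine ⟨⟨u, v, huv, ?_, by simpa using hvR⟩, u, v, huv, by simpa using huA,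
        by simpa using hvA⟩
      have : u ∈ R := hu ▸ Finset.mem_union_left _ huA
      simpa using this
  exact le_trans (Finset.card_le_card hsub) (Finset.card_union_le _ _)

include hd hu in
lemma oF_le_tF_add_cF' :
    (oF ends ↑B).card ≤ (tF ends ↑R ↑B).card + (cF ends ↑A ↑B).card := by
  have hu2 : B ∪ A = R := by rw [Finset.union_comm]; exact hu
  have h := oF_le_tF_add_cF ends hd.symm hu2
  have hc : (cF ends (↑B : Set V) ↑A).card = (cF ends (↑A : Set V) ↑B).card := by
    congr 1
    ext e
    simp only [mem_cF]
    constructor <;>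
    · rintro ⟨u, v, huv, h1, h2⟩
      exact ⟨v, u, by rw [huv, Sym2.eq_swap], h2, h1⟩
  rwa [hc] at h

end Split

/-- Nonnegative-weight insertion bound for finset sums. -/
lemma sum_insert_le'' {α : Type*} [DecidableEq α] {f : α → ℝ} (hf : ∀ x, 0 ≤ f x)
    (a : α) (s : Finset α) : (insert a s).sum f ≤ f a + s.sum f := by
  by_cases h : a ∈ s
  · rw [Finset.insert_eq_self.2 h]
    exact le_add_of_nonneg_left (hf a)
  · rw [Finset.sum_insert h]

lemma key_num {L tA tB c : ℝ} (hL : 1 ≤ L) (hc : 0 ≤ c)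
    (hA : 128 * L * c < tA) (hB : 128 * L * c < tB) (hAB : tA ≤ tB) :
    (tA + c) ^ (1 + 1/(16*L)) + (tB + c) ^ (1 + 1/(16*L)) ≤ (tA + tB) ^ (1 + 1/(16*L)) := by
  have hL0 : (0:ℝ) < L := by linarith
  set δ : ℝ := 1/(16*L) with hδ
  have hδ0 : 0 < δ := by positivity
  have htA : 0 < tA := lt_of_le_of_lt (by positivity) hA
  have htB : 0 < tB := lt_of_le_of_lt (by positivity) hB
  have hcA : c < tA := by nlinarith
  set r : ℝ := tA + tB with hr
  have hr0 : 0 < r := by positivity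
  set u : ℝ := 1/(64*L) with hu
  have hu0 : 0 < u := by positivity
  have hu1 : u ≤ 1/64 := by
    rw [hu]; rw [div_le_div_iff₀ (by positivity) (by norm_num)]; nlinarith
  have hbern : (3/4 : ℝ) ≤ (1 - u) ^ (16 * L) := by
    have := one_add_mul_self_le_rpow_one_add (s := -u) (by linarith) (p := 16 * L) (by nlinarith)
    have h16 : 16 * L * u = 1/4 := by rw [hu, mul_one_div, div_eq_iff (by positivity)]; ring
    calc (3/4 : ℝ) = 1 + 16 * L * (-u) := by rw [mul_neg, h16]; norm_num
    _ ≤ (1 + -u) ^ (16 * L) := this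
    _ = (1 - u) ^ (16 * L) := by ring_nf
  have h1 : tA + c ≤ (3/4) * r := by nlinarith
  have hpow : (1 - u) ^ ((16 * L) * δ) = 1 - u := by
    have : (16 * L) * δ = 1 := by rw [hδ, mul_one_div, div_self (by positivity)]
    rw [this, Real.rpow_one]
  have h3 : (tA + c) ^ δ ≤ (1 - u) * r ^ δ := by
    have hb1 : tA + c ≤ (1 - u) ^ (16*L) * r := by nlinarith
    calc (tA + c) ^ δ ≤ ((1 - u) ^ (16*L) * r) ^ δ :=
          Real.rpow_le_rpow (by positivity) hb1 hδ0.le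
    _ = ((1 - u) ^ (16*L)) ^ δ * r ^ δ := Real.mul_rpow (by positivity) hr0.le
    _ = (1 - u) * r ^ δ := by rw [← Real.rpow_mul (by nlinarith : (0:ℝ) ≤ 1 - u), hpow]
  have h4 : (tB + c) ^ δ ≤ r ^ δ := Real.rpow_le_rpow (by positivity) (by linarith) hδ0.le
  have hne : (1:ℝ) + δ ≠ 0 := by positivity
  rw [Real.rpow_one_add' (by positivity) hne, Real.rpow_one_add' (by positivity) hne,
      Real.rpow_one_add' hr0.le hne]
  have e1 : (tA + c) * (tA + c) ^ δ ≤ (tA + c) * ((1 - u) * r ^ δ) :=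
    mul_le_mul_of_nonneg_left h3 (by positivity)
  have e2 : (tB + c) * (tB + c) ^ δ ≤ (tB + c) * r ^ δ :=
    mul_le_mul_of_nonneg_left h4 (by positivity)
  have hfin : (tA + c) * ((1 - u) * r ^ δ) + (tB + c) * r ^ δ ≤ r * r ^ δ := by
    have hrδ : (0:ℝ) ≤ r ^ δ := by positivity
    have : (tA + c) * (1 - u) + (tB + c) ≤ r := by
      have h2c : 2 * c < u * tA := by
        rw [hu, div_mul_eq_mul_div, lt_div_iff₀ (by positivity)]
        nlinarith
      nlinarith
    nlinarith
  linarith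

/-- One weak step does not increase the potential `Σ_R |out R|^(1+δ)`. -/
lemma step_phi {z : ℕ} (hz2 : 2 ≤ z) {W W' : Finset (Finset V)}
    (h : WeakStep ends z W W') :
    ∑ X ∈ W', ((oF ends ↑X).card : ℝ) ^ (1 + 1/(16 * Real.logb 2 z)) ≤
      ∑ X ∈ W, ((oF ends ↑X).card : ℝ) ^ (1 + 1/(16 * Real.logb 2 z)) := by
  set L : ℝ := Real.logb 2 z with hLdef
  have hL : 1 ≤ L := by
    rw [hLdef, show (1:ℝ) = Real.logb 2 2 from (Real.logb_self_eq_one (by norm_num)).symm]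
    exact Real.logb_le_logb_of_le (by norm_num) (by norm_num) (by exact_mod_cast hz2)
  set p : ℝ := 1 + 1/(16 * L) with hp
  have hppos : 0 < p := by positivity
  set f : Finset V → ℝ := fun X => ((oF ends ↑X).card : ℝ) ^ p with hf
  have hfnn : ∀ X, 0 ≤ f X := fun X => Real.rpow_nonneg (by positivity) _
  obtain ⟨R, hR, A, B, hAne, hBne, hdisj, hun, hsp, hW'⟩ := h
  -- cardinalities
  set tA : ℕ := (tF ends (↑R : Set V) ↑A).card with htA
  set tB : ℕ := (tF ends (↑R : Set V) ↑B).card with htB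
  set c : ℕ := (cF ends (↑A : Set V) ↑B).card with hcc
  rw [tF_card, tF_card, cF_card] at hsp
  have hsp' : (c : ℝ) * (128 * L) < min (tA : ℝ) (tB : ℝ) := by
    convert hsp using 2 <;> norm_num [hLdef]
  rw [lt_min_iff] at hsp'
  have hspA : 128 * L * (c:ℝ) < tA := by linarith [hsp'.1]
  have hspB : 128 * L * (c:ℝ) < tB := by linarith [hsp'.2]
  have hrsum : (tA : ℝ) + (tB : ℝ) = ((oF ends (↑R : Set V)).card : ℝ) := by
    exact_mod_cast congrArg (Nat.cast (R := ℝ)) (tF_split ends hdisj hun)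
  have haA : ((oF ends (↑A : Set V)).card : ℝ) ≤ (tA : ℝ) + c := by
    exact_mod_cast oF_le_tF_add_cF ends hdisj hun
  have haB : ((oF ends (↑B : Set V)).card : ℝ) ≤ (tB : ℝ) + c := by
    exact_mod_cast oF_le_tF_add_cF' ends hdisj hun
  -- key inequality
  have hkey : f A + f B ≤ f R := by
    have hmono : ∀ (x y : ℝ), 0 ≤ x → x ≤ y → x ^ p ≤ y ^ p := fun x y hx hxy =>
      Real.rpow_le_rpow hx hxy hppos.le
    have h1 : f A ≤ ((tA : ℝ) + c) ^ p := hmono _ _ (by positivity) haA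
    have h2 : f B ≤ ((tB : ℝ) + c) ^ p := hmono _ _ (by positivity) haB
    have h3 : ((tA : ℝ) + c) ^ p + ((tB : ℝ) + c) ^ p ≤ ((tA : ℝ) + tB) ^ p := by
      rw [hp]
      rcases le_total (tA : ℝ) (tB : ℝ) with hle | hle
      · exact key_num hL (by positivity) hspA hspB hle
      · rw [show ((tA:ℝ) + tB) = ((tB:ℝ) + tA) by ring]
        have := key_num hL (by positivity) hspB hspA hle
        linarith
    have h4 : ((tA : ℝ) + tB) ^ p = f R := by rw [hrsum]
    linarith
  -- sums
  rw [hW']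
  calc (insert A (insert B (W.erase R))).sum f
      ≤ f A + (insert B (W.erase R)).sum f := sum_insert_le'' hfnn _ _
    _ ≤ f A + (f B + (W.erase R).sum f) := by
        linarith [sum_insert_le'' hfnn B (W.erase R)]
    _ ≤ f R + (W.erase R).sum f := by linarith
    _ = (W.erase R).sum f + f R := by ring
    _ = W.sum f := Finset.sum_erase_add _ _ hR

end Proof

/-- In the weak well-linked decomposition process — starting from the
connected components of `G[S]` and repeatedly splitting a set along a cut of sparsity
less than `1/(2^7 log z)` — the final partition `W` satisfies
`Σ_{R ∈ W} |out(R)| ≤ 1.2·|out(S)|`. -/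
theorem stmt11 {V E : Type*} [Fintype V] [Fintype E] [DecidableEq V] (ends : E → Sym2 V)
    (S : Finset V) (z : ℕ) (hz : z = outCard ends ↑S) (hz2 : 2 ≤ z)
    (W0 : Finset (Finset V))
    (hW0a : ∀ X ∈ W0, ∃ x ∈ S, ∀ y : V, y ∈ X ↔ (y ∈ S ∧ reachIn ends ↑S x y))
    (hW0b : ∀ x ∈ S, ∃ X ∈ W0, x ∈ X)
    (W : Finset (Finset V))
    (hreach : Relation.ReflTransGen (WeakStep ends z) W0 W) :
    (∑ R ∈ W, (outCard ends ↑R : ℝ)) ≤ 1.2 * z := by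
  -- basic setup
  set L : ℝ := Real.logb 2 z with hLdef
  have hL : 1 ≤ L := by
    rw [hLdef, show (1:ℝ) = Real.logb 2 2 from (Real.logb_self_eq_one (by norm_num)).symm]
    exact Real.logb_le_logb_of_le (by norm_num) (by norm_num) (by exact_mod_cast hz2)
  have hL0 : (0:ℝ) < L := by linarith
  set δ : ℝ := 1/(16*L) with hδ
  have hδ0 : 0 < δ := by positivity
  set p : ℝ := 1 + δ with hp
  have hp1 : 1 ≤ p := by rw [hp]; linarith
  have hppos : 0 < p := by linarith
  set f : Finset V → ℝ := fun X => ((oF ends ↑X).card : ℝ) ^ p with hf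
  have hzoF : z = (oF ends ↑S).card := by rw [hz, outCard_eq_oF]
  have hzpos : (0:ℝ) < z := by exact_mod_cast lt_of_lt_of_le (by norm_num) hz2
  -- symmetry and transitivity of reachability
  have hsymm : Symmetric (reachIn ends (↑S : Set V)) := by
    have : Symmetric (fun a b : V => a ∈ (↑S : Set V) ∧ b ∈ (↑S : Set V) ∧
        ∃ e, ends e = s(a, b)) := by
      rintro a b ⟨h1, h2, e, he⟩
      exact ⟨h2, h1, e, by rw [he, Sym2.eq_swap]⟩
    have hS : Std.Symm (fun a b : V => a ∈ (↑S : Set V) ∧ b ∈ (↑S : Set V) ∧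
        ∃ e, ends e = s(a, b)) := ⟨fun a b h => this h⟩
    exact fun a b h => Std.Symm.symm (self := Relation.ReflTransGen.stdSymm) a b h
  -- edges out of a component leave S
  have comp_out : ∀ X ∈ W0, ∀ e : E, Out ends ↑X e →
      ∃ u v, ends e = s(u, v) ∧ u ∈ X ∧ u ∈ S ∧ v ∉ S := by
    intro X hX e he
    obtain ⟨x, hxS, hchar⟩ := hW0a X hX
    obtain ⟨u, v, huv, huX, hvX⟩ := he
    simp only [Finset.mem_coe] at huX hvX
    have huS : u ∈ S := ((hchar u).1 huX).1
    have hrxu : reachIn ends (↑S : Set V) x u := ((hchar u).1 huX).2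
    refine ⟨u, v, huv, huX, huS, fun hvS => hvX ?_⟩
    refine (hchar v).2 ⟨hvS, hrxu.tail ?_⟩
    exact ⟨by simpa using huS, by simpa using hvS, e, huv⟩
  -- out-edge sets of distinct components are disjoint
  have hpd : ∀ X ∈ W0, ∀ Y ∈ W0, X ≠ Y → Disjoint (oF ends ↑X) (oF ends ↑Y) := by
    intro X hX Y hY hne
    rw [Finset.disjoint_left]
    intro e heX heY
    rw [mem_oF] at heX heY
    obtain ⟨u, v, huv, huX, huS, hvS⟩ := comp_out X hX e heX
    obtain ⟨u', v', huv', huY, huS', hvS'⟩ := comp_out Y hY e heY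
    rw [huv] at huv'
    have huu : u = u' := by
      rcases Sym2.eq_iff.1 huv' with ⟨h1, -⟩ | ⟨-, h2⟩
      · exact h1
      · exact absurd (h2 ▸ huS') hvS
    obtain ⟨x, hxS, hcx⟩ := hW0a X hX
    obtain ⟨y, hyS, hcy⟩ := hW0a Y hY
    apply hne
    have hrxu : reachIn ends (↑S : Set V) x u := ((hcx u).1 huX).2
    have hryu : reachIn ends (↑S : Set V) y u := ((hcy u).1 (huu ▸ huY)).2
    ext t
    rw [hcx t, hcy t]
    constructor
    · rintro ⟨htS, hrt⟩
      exact ⟨htS, (hryu.trans (hsymm hrxu)).trans hrt⟩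
    · rintro ⟨htS, hrt⟩
      exact ⟨htS, (hrxu.trans (hsymm hryu)).trans hrt⟩
  have hsubS : ∀ X ∈ W0, oF ends ↑X ⊆ oF ends ↑S := by
    intro X hX e he
    rw [mem_oF] at he ⊢
    obtain ⟨u, v, huv, huX, huS, hvS⟩ := comp_out X hX e he
    exact ⟨u, v, huv, by simpa using huS, by simpa using hvS⟩
  -- initial potential bound
  have hbase : ∑ X ∈ W0, f X ≤ (z:ℝ) ^ p := by
    have hsumc : (∑ X ∈ W0, ((oF ends ↑X).card : ℝ)) ≤ (z:ℝ) := by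
      have h1 : ∑ X ∈ W0, (oF ends ↑X).card = (W0.biUnion (fun X => oF ends ↑X)).card :=
        (Finset.card_biUnion hpd).symm
      have h2 : (W0.biUnion (fun X => oF ends ↑X)).card ≤ (oF ends ↑S).card :=
        Finset.card_le_card (Finset.biUnion_subset.2 hsubS)
      have : ∑ X ∈ W0, (oF ends ↑X).card ≤ z := by rw [hzoF]; omega
      exact_mod_cast this
    have hptwise : ∀ X ∈ W0, f X ≤ ((oF ends ↑X).card : ℝ) * (z:ℝ) ^ δ := by
      intro X hX
      rcases Nat.eq_zero_or_pos (oF ends ↑X).card with h0 | h0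
      · rw [hf]
        simp only [h0, Nat.cast_zero, zero_mul]
        rw [Real.zero_rpow (by positivity)]
      · have hc1 : (1:ℝ) ≤ ((oF ends ↑X).card : ℝ) := by exact_mod_cast h0
        have hcz : ((oF ends ↑X).card : ℝ) ≤ (z:ℝ) := by
          have := Finset.card_le_card (hsubS X hX)
          rw [hzoF]; exact_mod_cast this
        rw [hf]
        simp only
        rw [hp, Real.rpow_one_add' (by positivity) (by positivity)]
        exact mul_le_mul_of_nonneg_left
          (Real.rpow_le_rpow (by positivity) hcz hδ0.le) (by positivity)
    calc ∑ X ∈ W0, f X ≤ ∑ X ∈ W0, ((oF ends ↑X).card : ℝ) * (z:ℝ) ^ δ :=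
          Finset.sum_le_sum hptwise
    _ = (∑ X ∈ W0, ((oF ends ↑X).card : ℝ)) * (z:ℝ) ^ δ := by
          rw [Finset.sum_mul]
    _ ≤ (z:ℝ) * (z:ℝ) ^ δ := by
          exact mul_le_mul_of_nonneg_right hsumc (by positivity)
    _ = (z:ℝ) ^ p := by rw [hp, Real.rpow_one_add' hzpos.le (by positivity)]
  -- the potential never increases
  have hinv : ∑ X ∈ W, f X ≤ (z:ℝ) ^ p := by
    clear hW0a hW0b
    induction hreach with
    | refl => exact hbase
    | tail hsteps hstep ih => exact le_trans (step_phi ends hz2 hstep) ih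
  -- from the potential to the sum
  have hfinal : (∑ R ∈ W, (outCard ends ↑R : ℝ)) ≤ ∑ X ∈ W, f X := by
    apply Finset.sum_le_sum
    intro X hX
    rw [outCard_eq_oF, hf]
    simp only
    rcases Nat.eq_zero_or_pos (oF ends ↑X).card with h0 | h0
    · simp only [h0, Nat.cast_zero]
      rw [Real.zero_rpow (by positivity)]
    · have hc1 : (1:ℝ) ≤ ((oF ends ↑X).card : ℝ) := by exact_mod_cast h0
      calc ((oF ends ↑X).card : ℝ) = ((oF ends ↑X).card : ℝ) ^ (1:ℝ) :=
            (Real.rpow_one _).symm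
      _ ≤ ((oF ends ↑X).card : ℝ) ^ p := Real.rpow_le_rpow_of_exponent_le hc1 hp1
  -- compute z ^ p
  have hzp : (z:ℝ) ^ p = (z:ℝ) * (2:ℝ) ^ ((1:ℝ)/16) := by
    have hz2L : (z:ℝ) = (2:ℝ) ^ L := (Real.rpow_logb (by norm_num) (by norm_num) hzpos).symm
    have hLδ : L * δ = 1/16 := by rw [hδ]; field_simp
    rw [hp, Real.rpow_one_add' hzpos.le (by positivity)]
    congr 1
    rw [hz2L, ← Real.rpow_mul (by norm_num), hLδ]
  have h216 : (2:ℝ) ^ ((1:ℝ)/16) ≤ 1.2 := by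
    have h2 : (2:ℝ) ≤ (1.2:ℝ) ^ (16:ℕ) := by norm_num
    calc (2:ℝ) ^ ((1:ℝ)/16) ≤ ((1.2:ℝ) ^ (16:ℕ)) ^ ((1:ℝ)/16) :=
          Real.rpow_le_rpow (by norm_num) h2 (by norm_num)
    _ = (1.2:ℝ) := by
          rw [← Real.rpow_natCast (1.2:ℝ) 16, ← Real.rpow_mul (by norm_num)]
          norm_num
  calc (∑ R ∈ W, (outCard ends ↑R : ℝ)) ≤ (z:ℝ) ^ p := le_trans hfinal hinv
  _ = (z:ℝ) * (2:ℝ) ^ ((1:ℝ)/16) := hzp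
  _ ≤ (z:ℝ) * 1.2 := mul_le_mul_of_nonneg_left h216 hzpos.le
  _ = 1.2 * z := by ring

end VS
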